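/- arXiv:2005.09909 — 4 statements merged into one kernel-verified Lean document; each statement's English description precedes it below -/
import Mathlib

section
/- Let p ≥ 0, q ≥ 0 with 2p - q > 1, and let U_{δ,ξ}(x) = log(2δ/(δ² + (x-ξ)²)). Then there exist constants C > 0 and δ₀ > 0 (depending only on p, q, and η > 0) such that for all δ ∈ (0, δ₀) and all ξ ∈ ℝ, ∫_{ξ-η/2}^{ξ+η/2} e^{p U_{δ,ξ}(x)} |x-ξ|^q dx ≤ C δ^{q-p+1}. -/
open Real MeasureTheory

noncomputable def Ubub (δ ξ x : ℝ) : ℝ := Real.log (2 * δ / (δ ^ 2 + (x - ξ) ^ 2))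

lemma bubble_h_integrable (p q : ℝ) (hq : 0 ≤ q) (hpq : 1 < 2 * p - q) :
    Integrable (fun t : ℝ => |t| ^ q / (1 + t ^ 2) ^ p) := by
  have hr : (1 : ℝ) < 2 * p - q := hpq
  have hmaj : Integrable (fun t : ℝ => ((1 : ℝ) + ‖t‖ ^ 2) ^ (-(2 * p - q) / 2)) :=
    integrable_rpow_neg_one_add_norm_sq (by simpa using hr)
  refine hmaj.mono' (Measurable.aestronglyMeasurable (by fun_prop)) ?_
  filter_upwards with t
  have h1 : (0:ℝ) < 1 + t ^ 2 := by positivity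
  rw [Real.norm_eq_abs, abs_of_nonneg (by positivity)]
  have habs : |t| ^ q ≤ (1 + t ^ 2) ^ (q / 2) := by
    have : |t| ≤ (1 + t ^ 2) ^ ((1:ℝ) / 2) := by
      rw [← Real.sqrt_eq_rpow]
      have : |t| = Real.sqrt (t ^ 2) := (Real.sqrt_sq_eq_abs t).symm
      rw [this]
      exact Real.sqrt_le_sqrt (by nlinarith)
    calc |t| ^ q ≤ ((1 + t ^ 2) ^ ((1:ℝ) / 2)) ^ q :=
          Real.rpow_le_rpow (abs_nonneg t) this hq
      _ = (1 + t ^ 2) ^ (q / 2) := by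
          rw [← Real.rpow_mul h1.le]; congr 1; ring
  calc |t| ^ q / (1 + t ^ 2) ^ p ≤ (1 + t ^ 2) ^ (q / 2) / (1 + t ^ 2) ^ p := by
        gcongr
    _ = (1 + ‖t‖ ^ 2) ^ (-(2 * p - q) / 2) := by
        rw [Real.norm_eq_abs, sq_abs, div_eq_mul_inv, ← Real.rpow_neg h1.le,
          ← Real.rpow_add h1]
        ring_nf

theorem bubble_integral_estimate_high (p q η : ℝ) (hp : 0 ≤ p) (hq : 0 ≤ q)
    (hpq : 1 < 2 * p - q) (hη : 0 < η) :
    ∃ C > 0, ∃ δ₀ > 0, ∀ δ ∈ Set.Ioo (0:ℝ) δ₀, ∀ ξ : ℝ,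
      (∫ x in (ξ - η / 2)..(ξ + η / 2), Real.exp (p * Ubub δ ξ x) * |x - ξ| ^ q)
        ≤ C * δ ^ (q - p + 1) := by
  set h : ℝ → ℝ := fun t => |t| ^ q / (1 + t ^ 2) ^ p with hh
  have hInt : Integrable h := bubble_h_integrable p q hq hpq
  set K : ℝ := max (∫ t, h t) 1 with hK
  have hKpos : 0 < K := lt_of_lt_of_le one_pos (le_max_right _ _)
  refine ⟨2 ^ p * K, by positivity, 1, one_pos, ?_⟩
  rintro δ ⟨hδ, hδ1⟩ ξ
  set f : ℝ → ℝ := fun u => (2 * δ / (δ ^ 2 + u ^ 2)) ^ p * |u| ^ q with hf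
  have hbase : ∀ u : ℝ, 0 < 2 * δ / (δ ^ 2 + u ^ 2) := fun u => by positivity
  have step1 : (∫ x in (ξ - η / 2)..(ξ + η / 2),
      Real.exp (p * Ubub δ ξ x) * |x - ξ| ^ q) = ∫ x in (ξ - η / 2)..(ξ + η / 2), f (x - ξ) := by
    refine intervalIntegral.integral_congr fun x _ => ?_
    have := hbase (x - ξ)
    rw [hf]
    simp only [Ubub]
    rw [Real.rpow_def_of_pos this, mul_comm p]
  rw [step1]
  have step2 : (∫ x in (ξ - η / 2)..(ξ + η / 2), f (x - ξ))
      = ∫ u in (-(η / 2))..(η / 2), f u := by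
    rw [intervalIntegral.integral_comp_sub_right]
    congr 1 <;> ring
  rw [step2]
  -- substitution u = δ t
  have hδne : δ ≠ 0 := ne_of_gt hδ
  have step3 : (∫ u in (-(η / 2))..(η / 2), f u)
      = δ * ∫ t in (-(η / 2) / δ)..(η / 2 / δ), f (δ * t) := by
    rw [intervalIntegral.integral_comp_mul_left f hδne]
    rw [smul_eq_mul, ← mul_assoc, mul_inv_cancel₀ hδne, one_mul]
    congr 1 <;> field_simp <;> ring
  rw [step3]
  have hfδ : ∀ t : ℝ, f (δ * t) = 2 ^ p * δ ^ (q - p) * h t := by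
    intro t
    have h1 : (0:ℝ) < 1 + t ^ 2 := by positivity
    have e1 : δ ^ 2 + (δ * t) ^ 2 = δ ^ 2 * (1 + t ^ 2) := by ring
    have e2 : 2 * δ / (δ ^ 2 * (1 + t ^ 2)) = (2 / δ) * (1 + t ^ 2)⁻¹ := by
      field_simp
    simp only [hf]
    rw [e1, e2, Real.mul_rpow (by positivity) (by positivity),
      Real.div_rpow (by norm_num) hδ.le, abs_mul, abs_of_pos hδ,
      Real.mul_rpow hδ.le (abs_nonneg t), Real.inv_rpow h1.le, hh]
    rw [show q - p = q + (-p) from by ring, Real.rpow_add hδ, Real.rpow_neg hδ.le]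
    field_simp
  have step4 : (∫ t in (-(η / 2) / δ)..(η / 2 / δ), f (δ * t))
      = 2 ^ p * δ ^ (q - p) * ∫ t in (-(η / 2) / δ)..(η / 2 / δ), h t := by
    rw [← intervalIntegral.integral_const_mul]
    exact intervalIntegral.integral_congr fun t _ => hfδ t
  rw [step4]
  have hhnn : ∀ t : ℝ, 0 ≤ h t := fun t => by
    rw [hh]; positivity
  have hIle : (∫ t in (-(η / 2) / δ)..(η / 2 / δ), h t) ≤ K := by
    have hab : -(η / 2) / δ ≤ η / 2 / δ := by
      gcongr
      linarith
    rw [intervalIntegral.integral_of_le hab]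
    calc (∫ t in Set.Ioc (-(η / 2) / δ) (η / 2 / δ), h t)
        ≤ ∫ t, h t := setIntegral_le_integral hInt (ae_of_all _ hhnn)
      _ ≤ K := le_max_left _ _
  calc δ * (2 ^ p * δ ^ (q - p) * ∫ t in (-(η / 2) / δ)..(η / 2 / δ), h t)
      ≤ δ * (2 ^ p * δ ^ (q - p) * K) := by
        have : (0:ℝ) ≤ 2 ^ p * δ ^ (q - p) := by positivity
        have := mul_le_mul_of_nonneg_left hIle this
        nlinarith [Real.rpow_pos_of_pos hδ (q - p), Real.rpow_pos_of_pos (show (0:ℝ)<2 by norm_num) p]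
    _ = 2 ^ p * K * δ ^ (q - p + 1) := by
        rw [Real.rpow_add hδ, Real.rpow_one]; ring
end

section
/- Let p ≥ 0, q ≥ 0 with 2p - q < 1, and let U_{δ,ξ}(x) = log(2δ/(δ² + (x-ξ)²)). Then there exist constants C > 0 and δ₀ > 0 (depending only on p, q, η) such that for all δ ∈ (0, δ₀) and all ξ ∈ ℝ, ∫_{ξ-η/2}^{ξ+η/2} e^{p U_{δ,ξ}(x)} |x-ξ|^q dx ≤ C δ^{p}. -/
open Real MeasureTheory

theorem bubble_integral_estimate_low (p q η : ℝ) (hp : 0 ≤ p) (hq : 0 ≤ q)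
    (hpq : 2 * p - q < 1) (hη : 0 < η) :
    ∃ C > 0, ∃ δ₀ > 0, ∀ δ ∈ Set.Ioo (0:ℝ) δ₀, ∀ ξ : ℝ,
      (∫ x in (ξ - η / 2)..(ξ + η / 2), Real.exp (p * Ubub δ ξ x) * |x - ξ| ^ q)
        ≤ C * δ ^ p := by
  set r : ℝ := q - 2 * p with hrdef
  have hr : (-1:ℝ) < r := by simp [hrdef]; linarith
  have hr1 : (0:ℝ) < r + 1 := by linarith
  set a : ℝ := η / 2 with hadef
  have ha : 0 < a := by positivity
  refine ⟨2 ^ (p+1) * a ^ (r+1) / (r+1), by positivity, 1, one_pos, ?_⟩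
  intro δ hδ ξ
  obtain ⟨hδ0, _⟩ := hδ
  set f : ℝ → ℝ := fun t => Real.exp (p * Real.log (2 * δ / (δ ^ 2 + t ^ 2))) * |t| ^ q
    with hfdef
  have hfpos : ∀ t : ℝ, 0 < 2 * δ / (δ ^ 2 + t ^ 2) := by
    intro t; positivity
  -- continuity of f
  have hfc : Continuous f := by
    have hden : Continuous fun t : ℝ => δ ^ 2 + t ^ 2 := by continuity
    have harg : Continuous fun t : ℝ => 2 * δ / (δ ^ 2 + t ^ 2) :=
      continuous_const.div hden (fun t => by positivity)
    have h1 : Continuous fun t : ℝ => Real.exp (p * Real.log (2 * δ / (δ ^ 2 + t ^ 2))) := by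
      apply Real.continuous_exp.comp
      apply Continuous.mul continuous_const
      exact Real.continuousOn_log.comp_continuous harg (fun t => ne_of_gt (hfpos t))
    rcases eq_or_lt_of_le hq with hq0 | hq0
    · simp only [hfdef, ← hq0, Real.rpow_zero, mul_one]; exact h1
    · exact h1.mul ((continuous_abs.rpow_const (fun t => Or.inr hq0.le)))
  have hfint : ∀ u v : ℝ, IntervalIntegrable f volume u v := fun u v =>
    hfc.intervalIntegrable u v
  have hfeven : ∀ t : ℝ, f (-t) = f t := by
    intro t; simp [hfdef, neg_sq]
  -- translation
  have htrans : (∫ x in (ξ - a)..(ξ + a), Real.exp (p * Ubub δ ξ x) * |x - ξ| ^ q)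
      = ∫ t in (-a)..a, f t := by
    have hfuneq : ∀ x, Real.exp (p * Ubub δ ξ x) * |x - ξ| ^ q = f (x - ξ) := by
      intro x; simp [hfdef, Ubub]
    rw [intervalIntegral.integral_congr (g := fun x => f (x - ξ)) fun x _ => hfuneq x,
      intervalIntegral.integral_comp_sub_right f ξ]
    congr 1 <;> ring
  have hsplit : (∫ t in (-a)..a, f t) = (∫ t in (-a)..(0:ℝ), f t) + ∫ t in (0:ℝ)..a, f t :=
    (intervalIntegral.integral_add_adjacent_intervals (hfint _ _) (hfint _ _)).symm
  have hneg : (∫ t in (-a)..(0:ℝ), f t) = ∫ t in (0:ℝ)..a, f t := by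
    have := intervalIntegral.integral_comp_neg (a := (0:ℝ)) (b := a) f
    simp only [neg_zero] at this
    rw [← this]
    congr 1; ext t; exact hfeven t
  -- bound on [0, a]
  have hg_int : IntervalIntegrable (fun t : ℝ => (2*δ) ^ p * t ^ r) volume 0 a :=
    (intervalIntegral.intervalIntegrable_rpow' hr).const_mul _
  have hae : f ≤ᵐ[volume.restrict (Set.Icc (0:ℝ) a)] fun t => (2*δ) ^ p * t ^ r := by
    have hnull : (volume.restrict (Set.Icc (0:ℝ) a)) {(0:ℝ)} = 0 := by
      simp
    filter_upwards [ae_restrict_mem measurableSet_Icc,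
      measure_eq_zero_iff_ae_notMem.mp hnull] with t ht ht0
    have htpos : 0 < t := lt_of_le_of_ne ht.1 (fun h => ht0 (by simp [← h]))
    have habs : |t| = t := abs_of_pos htpos
    have h1 : Real.exp (p * Real.log (2 * δ / (δ ^ 2 + t ^ 2)))
        = (2 * δ / (δ ^ 2 + t ^ 2)) ^ p := by
      rw [Real.rpow_def_of_pos (hfpos t), mul_comm]
    have h2 : (2 * δ / (δ ^ 2 + t ^ 2)) ^ p ≤ (2 * δ / t ^ 2) ^ p := by
      apply Real.rpow_le_rpow (le_of_lt (hfpos t)) _ hp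
      apply div_le_div_of_nonneg_left (by positivity) (by positivity) (by nlinarith)
    have hsq : ((t ^ 2 : ℝ)) ^ p = t ^ (2 * p) := by
      rw [← Real.rpow_natCast t 2, ← Real.rpow_mul htpos.le]; norm_num
    have h3 : (2 * δ / t ^ 2) ^ p * t ^ q = (2*δ) ^ p * t ^ r := by
      rw [Real.div_rpow (by positivity) (by positivity), hsq, hrdef,
        Real.rpow_sub htpos]
      ring
    calc f t = (2 * δ / (δ ^ 2 + t ^ 2)) ^ p * t ^ q := by rw [hfdef]; simp [h1, habs]
      _ ≤ (2 * δ / t ^ 2) ^ p * t ^ q :=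
          mul_le_mul_of_nonneg_right h2 (Real.rpow_nonneg htpos.le q)
      _ = (2*δ) ^ p * t ^ r := h3
  have hmono : (∫ t in (0:ℝ)..a, f t) ≤ ∫ t in (0:ℝ)..a, (2*δ) ^ p * t ^ r :=
    intervalIntegral.integral_mono_ae_restrict ha.le (hfint _ _) hg_int hae
  have hval : (∫ t in (0:ℝ)..a, (2*δ) ^ p * t ^ r) = (2*δ) ^ p * (a ^ (r+1) / (r+1)) := by
    rw [intervalIntegral.integral_const_mul, integral_rpow (Or.inl hr),
      Real.zero_rpow (ne_of_gt hr1), sub_zero]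
  have h2d : (2*δ) ^ p = 2 ^ p * δ ^ p := Real.mul_rpow (by norm_num) hδ0.le
  have h2p : (2:ℝ) ^ (p+1) = 2 ^ p * 2 := by
    rw [Real.rpow_add (by norm_num), Real.rpow_one]
  calc (∫ x in (ξ - a)..(ξ + a), Real.exp (p * Ubub δ ξ x) * |x - ξ| ^ q)
      = (∫ t in (-a)..(0:ℝ), f t) + ∫ t in (0:ℝ)..a, f t := by rw [htrans, hsplit]
    _ = 2 * ∫ t in (0:ℝ)..a, f t := by rw [hneg]; ring
    _ ≤ 2 * ((2*δ) ^ p * (a ^ (r+1) / (r+1))) := by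
        have := hmono; rw [hval] at this
        linarith
    _ = 2 ^ (p+1) * a ^ (r+1) / (r+1) * δ ^ p := by
        rw [h2d, h2p]; ring
end

section
/- Let k ≥ 2 and -1 < ξ₁ < ξ₂ < … < ξ_k < 1. Then ∑_{i≠j} (-1)^{i+j} G(ξ_i, ξ_j) ≤ 0, where G(a,b) = (1/π) log((1 - ab + √((1-a²)(1-b²)))/|a-b|). -/
open Real Finset

noncomputable def greenG (a b : ℝ) : ℝ :=
  (1 / π) * Real.log ((1 - a * b + Real.sqrt ((1 - a ^ 2) * (1 - b ^ 2))) / |b - a|)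

lemma greenG_self (a : ℝ) : greenG a a = 0 := by
  simp [greenG]

lemma greenG_symm (a b : ℝ) : greenG a b = greenG b a := by
  unfold greenG
  rw [show 1 - a * b = 1 - b * a from by ring,
    show (1 - a ^ 2) * (1 - b ^ 2) = (1 - b ^ 2) * (1 - a ^ 2) from by ring, abs_sub_comm]

lemma greenG_neg (a b : ℝ) : greenG (-a) (-b) = greenG a b := by
  unfold greenG
  rw [show 1 - (-a) * (-b) = 1 - a * b from by ring,
    show (1 - (-a) ^ 2) * (1 - (-b) ^ 2) = (1 - a ^ 2) * (1 - b ^ 2) from by ring,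
    show (-b) - (-a) = a - b from by ring, abs_sub_comm]

lemma greenG_trig {α β : ℝ} (hβ : 0 < β) (hβα : β < α) (hα : α < π) :
    greenG (Real.cos α) (Real.cos β) =
      (1 / π) * Real.log (Real.sin ((α + β) / 2) / Real.sin ((α - β) / 2)) := by
  have hα0 : 0 < α := hβ.trans hβα
  have hβπ : β < π := hβα.trans hα
  have hsα : 0 < Real.sin α := Real.sin_pos_of_pos_of_lt_pi hα0 hα
  have hsβ : 0 < Real.sin β := Real.sin_pos_of_pos_of_lt_pi hβ hβπ
  have hu : 0 < Real.sin ((α + β) / 2) :=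
    Real.sin_pos_of_pos_of_lt_pi (by linarith) (by linarith)
  have hv : 0 < Real.sin ((α - β) / 2) :=
    Real.sin_pos_of_pos_of_lt_pi (by linarith) (by linarith)
  have h1 : Real.sqrt ((1 - Real.cos α ^ 2) * (1 - Real.cos β ^ 2))
      = Real.sin α * Real.sin β := by
    rw [show (1 - Real.cos α ^ 2) * (1 - Real.cos β ^ 2) = (Real.sin α * Real.sin β) ^ 2 from by
      have h₁ := Real.sin_sq_add_cos_sq α
      have h₂ := Real.sin_sq_add_cos_sq β
      nlinarith]
    exact Real.sqrt_sq (by positivity)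
  have h2' : Real.cos β - Real.cos α
      = 2 * Real.sin ((α + β) / 2) * Real.sin ((α - β) / 2) := by
    rw [Real.cos_sub_cos, show (β - α) / 2 = -((α - β) / 2) from by ring, Real.sin_neg,
      show (β + α) / 2 = (α + β) / 2 from by ring]
    ring
  have h2 : |Real.cos β - Real.cos α|
      = 2 * Real.sin ((α + β) / 2) * Real.sin ((α - β) / 2) := by
    rw [h2', abs_of_pos (by positivity)]
  have h3 : 1 - Real.cos α * Real.cos β + Real.sin α * Real.sin β
      = 2 * Real.sin ((α + β) / 2) ^ 2 := by
    have hca := Real.cos_add α β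
    have hcs := Real.cos_sq ((α + β) / 2)
    have hss := Real.sin_sq ((α + β) / 2)
    rw [show 2 * ((α + β) / 2) = α + β from by ring] at hcs
    linarith
  unfold greenG
  rw [h1, h2, h3, show 2 * Real.sin ((α + β) / 2) ^ 2
      / (2 * Real.sin ((α + β) / 2) * Real.sin ((α - β) / 2))
      = Real.sin ((α + β) / 2) / Real.sin ((α - β) / 2) from by
    field_simp]

lemma greenG_nonneg {a b : ℝ} (ha : -1 < a) (hab : a < b) (hb : b < 1) :
    0 ≤ greenG a b := by
  set α := Real.arccos a with hαd
  set β := Real.arccos b with hβd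
  have ha1 : a ≤ 1 := le_of_lt (hab.trans hb)
  have hb1 : -1 ≤ b := le_of_lt (ha.trans hab)
  have hβα : β < α := Real.strictAntiOn_arccos ⟨le_of_lt ha, ha1⟩ ⟨hb1, le_of_lt hb⟩ hab
  have hβ0 : 0 < β := Real.arccos_pos.mpr hb
  have hαπ : α < π := lt_of_le_of_ne (Real.arccos_le_pi a) (fun h : α = π => by
    have hca : Real.cos α = a := Real.cos_arccos (le_of_lt ha) ha1
    rw [h, Real.cos_pi] at hca
    linarith)
  have key := greenG_trig hβ0 hβα hαπ
  rw [Real.cos_arccos (le_of_lt ha) ha1, Real.cos_arccos hb1 (le_of_lt hb)] at key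
  rw [key]
  have hv : 0 < Real.sin ((α - β) / 2) :=
    Real.sin_pos_of_pos_of_lt_pi (by linarith) (by linarith [Real.pi_pos])
  have hsub := Real.sin_sub_sin ((α + β) / 2) ((α - β) / 2)
  rw [show ((α + β) / 2 - (α - β) / 2) / 2 = β / 2 from by ring,
    show ((α + β) / 2 + (α - β) / 2) / 2 = α / 2 from by ring] at hsub
  have h1 : 0 ≤ Real.sin (β / 2) := Real.sin_nonneg_of_nonneg_of_le_pi (by linarith)
    (by linarith [Real.pi_pos])
  have h2 : 0 ≤ Real.cos (α / 2) := Real.cos_nonneg_of_mem_Icc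
    ⟨by linarith [Real.pi_pos], by linarith⟩
  have hle : Real.sin ((α - β) / 2) ≤ Real.sin ((α + β) / 2) := by nlinarith
  have : (1 : ℝ) ≤ Real.sin ((α + β) / 2) / Real.sin ((α - β) / 2) :=
    (one_le_div hv).mpr hle
  have := Real.log_nonneg this
  positivity

lemma greenG_anti {a b c : ℝ} (ha : -1 < a) (hab : a < b) (hbc : b < c) (hc : c < 1) :
    greenG a c ≤ greenG a b := by
  set α := Real.arccos a with hαd
  set β := Real.arccos b with hβd
  set γ := Real.arccos c with hγd
  have ha1 : a ≤ 1 := by linarith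
  have hb1 : -1 ≤ b := by linarith
  have hb2 : b ≤ 1 := by linarith
  have hc1 : -1 ≤ c := by linarith
  have hβα : β < α := Real.strictAntiOn_arccos ⟨le_of_lt ha, ha1⟩ ⟨hb1, hb2⟩ hab
  have hγβ : γ < β := Real.strictAntiOn_arccos ⟨hb1, hb2⟩ ⟨hc1, le_of_lt hc⟩ hbc
  have hγ0 : 0 < γ := Real.arccos_pos.mpr hc
  have hαπ : α < π := lt_of_le_of_ne (Real.arccos_le_pi a) (fun h : α = π => by
    have hca : Real.cos α = a := Real.cos_arccos (le_of_lt ha) ha1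
    rw [h, Real.cos_pi] at hca
    linarith)
  have hβ0 : 0 < β := hγ0.trans hγβ
  have key1 := greenG_trig hβ0 hβα hαπ
  have key2 := greenG_trig hγ0 (hγβ.trans hβα) hαπ
  rw [Real.cos_arccos (le_of_lt ha) ha1, Real.cos_arccos hb1 hb2] at key1
  rw [Real.cos_arccos (le_of_lt ha) ha1, Real.cos_arccos hc1 (le_of_lt hc)] at key2
  rw [key1, key2]
  have hu1 : 0 < Real.sin ((α + β) / 2) :=
    Real.sin_pos_of_pos_of_lt_pi (by linarith) (by linarith)
  have hv1 : 0 < Real.sin ((α - β) / 2) :=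
    Real.sin_pos_of_pos_of_lt_pi (by linarith) (by linarith [Real.pi_pos])
  have hu2 : 0 < Real.sin ((α + γ) / 2) :=
    Real.sin_pos_of_pos_of_lt_pi (by linarith) (by linarith)
  have hv2 : 0 < Real.sin ((α - γ) / 2) :=
    Real.sin_pos_of_pos_of_lt_pi (by linarith) (by linarith [Real.pi_pos])
  have e1 : Real.cos ((β + γ) / 2) - Real.cos (α + (β - γ) / 2)
      = 2 * Real.sin ((α + β) / 2) * Real.sin ((α - γ) / 2) := by
    rw [show (β + γ) / 2 = (α + β) / 2 - (α - γ) / 2 from by ring,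
      show α + (β - γ) / 2 = (α + β) / 2 + (α - γ) / 2 from by ring,
      Real.cos_sub, Real.cos_add]
    ring
  have e2 : Real.cos ((β + γ) / 2) - Real.cos (α - (β - γ) / 2)
      = 2 * Real.sin ((α + γ) / 2) * Real.sin ((α - β) / 2) := by
    rw [show (β + γ) / 2 = (α + γ) / 2 - (α - β) / 2 from by ring,
      show α - (β - γ) / 2 = (α + γ) / 2 + (α - β) / 2 from by ring,
      Real.cos_sub, Real.cos_add]
    ring
  have e3 : Real.cos (α - (β - γ) / 2) - Real.cos (α + (β - γ) / 2)
      = 2 * Real.sin α * Real.sin ((β - γ) / 2) := by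
    rw [Real.cos_sub, Real.cos_add]
    ring
  have hsα : 0 ≤ Real.sin α := Real.sin_nonneg_of_nonneg_of_le_pi (by linarith) (by linarith)
  have hsd : 0 ≤ Real.sin ((β - γ) / 2) :=
    Real.sin_nonneg_of_nonneg_of_le_pi (by linarith) (by linarith [Real.pi_pos])
  have hmul : Real.sin ((α + γ) / 2) * Real.sin ((α - β) / 2)
      ≤ Real.sin ((α + β) / 2) * Real.sin ((α - γ) / 2) := by nlinarith
  have hdiv : Real.sin ((α + γ) / 2) / Real.sin ((α - γ) / 2)
      ≤ Real.sin ((α + β) / 2) / Real.sin ((α - β) / 2) := by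
    rw [div_le_div_iff₀ hv2 hv1]
    nlinarith
  have hlog := Real.log_le_log (by positivity) hdiv
  have hπ : (0 : ℝ) < 1 / π := by positivity
  nlinarith [hlog]

lemma greenG_anti' {a b c : ℝ} (ha : -1 < a) (hab : a < b) (hbc : b < c) (hc : c < 1) :
    greenG a c ≤ greenG b c := by
  have h := greenG_anti (a := -c) (b := -b) (c := -a)
    (by linarith) (by linarith) (by linarith) (by linarith)
  rw [greenG_neg, greenG_neg] at h
  calc greenG a c = greenG c a := greenG_symm a c
    _ ≤ greenG c b := h
    _ = greenG b c := greenG_symm c b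

lemma neg_one_pow_congr' {a b : ℕ} (h : a % 2 = b % 2) : ((-1 : ℝ)) ^ a = (-1) ^ b := by
  rcases Nat.even_or_odd a with he | ho
  · have ha2 := Nat.even_iff.mp he
    rw [he.neg_one_pow, (Nat.even_iff.mpr (by omega : b % 2 = 0)).neg_one_pow]
  · have ha2 := Nat.odd_iff.mp ho
    rw [ho.neg_one_pow, (Nat.odd_iff.mpr (by omega : b % 2 = 1)).neg_one_pow]

lemma alt_sum : ∀ (N : ℕ) (f : ℕ → ℝ), (∀ m, m < N → 0 ≤ f m) →
    (∀ m, m + 1 < N → f (m + 1) ≤ f m) →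
    0 ≤ (∑ m ∈ Finset.range N, (-1 : ℝ) ^ m * f m) ∧
      (0 < N → (∑ m ∈ Finset.range N, (-1 : ℝ) ^ m * f m) ≤ f 0) := by
  intro N
  induction N with
  | zero => intro f _ _; simp
  | succ n ih =>
    intro f h0 h1
    have key : (∑ m ∈ Finset.range (n + 1), (-1 : ℝ) ^ m * f m)
        = f 0 - ∑ m ∈ Finset.range n, (-1 : ℝ) ^ m * f (m + 1) := by
      rw [Finset.sum_range_succ']
      have hneg : (∑ m ∈ Finset.range n, (-1 : ℝ) ^ (m + 1) * f (m + 1))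
          = -∑ m ∈ Finset.range n, (-1 : ℝ) ^ m * f (m + 1) := by
        rw [← Finset.sum_neg_distrib]
        apply Finset.sum_congr rfl
        intro m _
        rw [pow_succ]
        ring
      rw [hneg]
      simp
      ring
    obtain ⟨ihl, ihu⟩ := ih (fun m => f (m + 1)) (fun m hm => h0 (m + 1) (by omega))
      (fun m hm => h1 (m + 1) (by omega))
    constructor
    · rw [key]
      rcases Nat.eq_zero_or_pos n with hn | hn
      · subst hn
        simpa using h0 0 (by omega)
      · have hub := ihu hn
        have h10 := h1 0 (by omega)
        linarith
    · intro _
      rw [key]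
      linarith

theorem alternating_green_sum_nonpos (k : ℕ) (hk : 2 ≤ k) (ξ : Fin k → ℝ)
    (hmono : StrictMono ξ) (hmem : ∀ i, ξ i ∈ Set.Ioo (-1:ℝ) 1) :
    (∑ p ∈ (Finset.univ : Finset (Fin k)).offDiag,
      (-1 : ℝ) ^ ((p.1 : ℕ) + (p.2 : ℕ)) * greenG (ξ p.1) (ξ p.2)) ≤ 0 := by
  classical
  have hk1 : k - 1 < k := by omega
  set x : ℕ → ℝ := fun n => ξ ⟨min n (k - 1), by omega⟩ with hxdef
  have hx : ∀ (n : ℕ) (h : n < k), x n = ξ ⟨n, h⟩ := by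
    intro n h
    simp only [hxdef]
    congr 1
    exact Fin.ext (by simp; omega)
  have hxmem : ∀ n, x n ∈ Set.Ioo (-1 : ℝ) 1 := fun n => hmem _
  have hxlt : ∀ m n, m < n → n < k → x m < x n := by
    intro m n hmn hn
    rw [hx m (by omega), hx n hn]
    exact hmono (Fin.mk_lt_mk.mpr hmn)
  have step1 : (∑ p ∈ (Finset.univ : Finset (Fin k)).offDiag,
        (-1 : ℝ) ^ ((p.1 : ℕ) + (p.2 : ℕ)) * greenG (ξ p.1) (ξ p.2))
      = ∑ p ∈ (Finset.univ : Finset (Fin k)) ×ˢ (Finset.univ : Finset (Fin k)),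
        (-1 : ℝ) ^ ((p.1 : ℕ) + (p.2 : ℕ)) * greenG (ξ p.1) (ξ p.2) := by
    apply Finset.sum_subset
    · intro p _
      exact Finset.mem_product.mpr ⟨Finset.mem_univ _, Finset.mem_univ _⟩
    · intro p _ hp
      have hpp : p.1 = p.2 := by
        by_contra h
        exact hp (Finset.mem_offDiag.mpr ⟨Finset.mem_univ _, Finset.mem_univ _, h⟩)
      rw [hpp, greenG_self, mul_zero]
  rw [step1, Finset.sum_product]
  have step2 : (∑ i : Fin k, ∑ j : Fin k,
        (-1 : ℝ) ^ ((i : ℕ) + (j : ℕ)) * greenG (ξ i) (ξ j))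
      = ∑ i ∈ Finset.range k, ∑ j ∈ Finset.range k,
        (-1 : ℝ) ^ (i + j) * greenG (x i) (x j) := by
    rw [← Fin.sum_univ_eq_sum_range (fun i => ∑ j ∈ Finset.range k,
      (-1 : ℝ) ^ (i + j) * greenG (x i) (x j)) k]
    apply Finset.sum_congr rfl
    intro i _
    rw [← Fin.sum_univ_eq_sum_range (fun j => (-1 : ℝ) ^ ((i : ℕ) + j) * greenG (x (i : ℕ)) (x j)) k]
    apply Finset.sum_congr rfl
    intro j _
    rw [hx _ i.isLt, hx _ j.isLt]
  rw [step2]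
  apply Finset.sum_nonpos
  intro i hi
  have hik : i < k := Finset.mem_range.mp hi
  have split : (∑ j ∈ Finset.range k, (-1 : ℝ) ^ (i + j) * greenG (x i) (x j))
      = (∑ j ∈ Finset.range i, (-1 : ℝ) ^ (i + j) * greenG (x i) (x j))
        + ∑ j ∈ Finset.Ico (i + 1) k, (-1 : ℝ) ^ (i + j) * greenG (x i) (x j) := by
    rw [Finset.range_eq_Ico,
      ← Finset.sum_Ico_consecutive _ (Nat.zero_le i) (le_of_lt hik),
      Finset.sum_eq_sum_Ico_succ_bot hik, greenG_self, mul_zero, zero_add,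
      ← Finset.range_eq_Ico]
  rw [split]
  have lower : (∑ j ∈ Finset.range i, (-1 : ℝ) ^ (i + j) * greenG (x i) (x j)) ≤ 0 := by
    rw [← Finset.sum_range_reflect (fun j => (-1 : ℝ) ^ (i + j) * greenG (x i) (x j)) i]
    have hterm : ∀ m ∈ Finset.range i,
        (-1 : ℝ) ^ (i + (i - 1 - m)) * greenG (x i) (x (i - 1 - m))
        = -((-1 : ℝ) ^ m * greenG (x i) (x (i - 1 - m))) := by
      intro m hm
      have hm' : m < i := Finset.mem_range.mp hm
      rw [neg_one_pow_congr' (a := i + (i - 1 - m)) (b := m + 1) (by omega), pow_succ]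
      ring
    rw [Finset.sum_congr rfl hterm, Finset.sum_neg_distrib]
    have halt := (alt_sum i (fun m => greenG (x i) (x (i - 1 - m)))
      (by
        intro m hm
        have h1 : i - 1 - m < i := by omega
        have := greenG_nonneg (a := x (i - 1 - m)) (b := x i)
          (hxmem _).1 (hxlt _ _ h1 hik) (hxmem _).2
        rw [greenG_symm] at this
        exact this)
      (by
        intro m hm
        have h2 : i - 1 - (m + 1) < i - 1 - m := by omega
        have h3 : i - 1 - m < i := by omega
        have := greenG_anti' (a := x (i - 1 - (m + 1))) (b := x (i - 1 - m)) (c := x i)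
          (hxmem _).1 (hxlt _ _ h2 (by omega)) (hxlt _ _ h3 hik) (hxmem _).2
        calc greenG (x i) (x (i - 1 - (m + 1))) = greenG (x (i - 1 - (m + 1))) (x i) :=
              greenG_symm _ _
          _ ≤ greenG (x (i - 1 - m)) (x i) := this
          _ = greenG (x i) (x (i - 1 - m)) := greenG_symm _ _)).1
    linarith
  have upper : (∑ j ∈ Finset.Ico (i + 1) k, (-1 : ℝ) ^ (i + j) * greenG (x i) (x j)) ≤ 0 := by
    rw [Finset.sum_Ico_eq_sum_range]
    have hterm : ∀ m ∈ Finset.range (k - (i + 1)),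
        (-1 : ℝ) ^ (i + (i + 1 + m)) * greenG (x i) (x (i + 1 + m))
        = -((-1 : ℝ) ^ m * greenG (x i) (x (i + 1 + m))) := by
      intro m hm
      rw [neg_one_pow_congr' (a := i + (i + 1 + m)) (b := m + 1) (by omega), pow_succ]
      ring
    rw [Finset.sum_congr rfl hterm, Finset.sum_neg_distrib]
    have halt := (alt_sum (k - (i + 1)) (fun m => greenG (x i) (x (i + 1 + m)))
      (by
        intro m hm
        exact greenG_nonneg (hxmem _).1 (hxlt _ _ (by omega) (by omega)) (hxmem _).2)
      (by
        intro m hm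
        exact greenG_anti (hxmem _).1 (hxlt _ _ (by omega) (by omega))
          (hxlt _ _ (by omega) (by omega)) (hxmem _).2)).1
    linarith
  linarith
end

section
/- Let -1 < ξ₁ < … < ξ_k < 1 and u₀(x) = ∑_{i=1}^k (-1)^{i-1} G(ξ_i, x) for x ∈ (-1,1) \ {ξ₁,…,ξ_k}. Set ξ₀ = -1, ξ_{k+1} = 1. Then there exists a constant c > 0 (depending on k and the ξ_i) such that for every j ∈ {0,…,k} and every x ∈ (ξ_j, ξ_{j+1}), (-1)^j u₀'(x) √(1-x²) ≥ c. In particular u₀ is strictly monotone on each interval (ξ_j, ξ_{j+1}). -/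
set_option maxHeartbeats 1000000

open Real Finset

lemma hasDerivAt_greenG {a x : ℝ} (ha : -1 < a) (ha' : a < 1) (hx : -1 < x) (hx' : x < 1)
    (hxa : x ≠ a) :
    HasDerivAt (greenG a)
      ((1 / π) * (Real.sqrt (1 - a ^ 2) / ((a - x) * Real.sqrt (1 - x ^ 2)))) x := by
  have hs2 : Real.sqrt (1 - a ^ 2) ^ 2 = 1 - a ^ 2 := Real.sq_sqrt (by nlinarith)
  have ht2 : Real.sqrt (1 - x ^ 2) ^ 2 = 1 - x ^ 2 := Real.sq_sqrt (by nlinarith)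
  have hs_pos : 0 < Real.sqrt (1 - a ^ 2) := Real.sqrt_pos.2 (by nlinarith)
  have ht_pos : 0 < Real.sqrt (1 - x ^ 2) := Real.sqrt_pos.2 (by nlinarith)
  set s := Real.sqrt (1 - a ^ 2) with hs_def
  set t := Real.sqrt (1 - x ^ 2) with ht_def
  have hst : Real.sqrt ((1 - a ^ 2) * (1 - x ^ 2)) = s * t := Real.sqrt_mul (by nlinarith) _
  have hApos : ∀ y ∈ Set.Ioo (-1:ℝ) 1, 0 < 1 - a * y + Real.sqrt ((1 - a ^ 2) * (1 - y ^ 2)) := by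
    intro y hy
    have h1 : a * y < 1 := by nlinarith [hy.1, hy.2, abs_lt.2 ⟨ha, ha'⟩]
    have h2 : 0 ≤ Real.sqrt ((1 - a ^ 2) * (1 - y ^ 2)) := Real.sqrt_nonneg _
    linarith
  -- derivative of the inner sqrt argument
  have hw : HasDerivAt (fun y : ℝ => (1 - a ^ 2) * (1 - y ^ 2)) ((1 - a ^ 2) * (-(2 * x))) x := by
    have h1 : HasDerivAt (fun y : ℝ => 1 - y ^ 2) (-(2 * x)) x := by
      simpa using (hasDerivAt_pow 2 x).const_sub 1
    exact h1.const_mul _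
  have hwx : (1 - a ^ 2) * (1 - x ^ 2) ≠ 0 := ne_of_gt (mul_pos (by nlinarith) (by nlinarith))
  have hsq : HasDerivAt (fun y : ℝ => Real.sqrt ((1 - a ^ 2) * (1 - y ^ 2)))
      ((1 - a ^ 2) * (-(2 * x)) / (2 * Real.sqrt ((1 - a ^ 2) * (1 - x ^ 2)))) x :=
    hw.sqrt hwx
  have hlin : HasDerivAt (fun y : ℝ => 1 - a * y) (-a) x := by
    simpa using ((hasDerivAt_id x).const_mul a).const_sub 1
  have hA : HasDerivAt (fun y : ℝ => 1 - a * y + Real.sqrt ((1 - a ^ 2) * (1 - y ^ 2)))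
      (-a + (1 - a ^ 2) * (-(2 * x)) / (2 * Real.sqrt ((1 - a ^ 2) * (1 - x ^ 2)))) x :=
    hlin.add hsq
  have hAx_pos : 0 < 1 - a * x + Real.sqrt ((1 - a ^ 2) * (1 - x ^ 2)) := hApos x ⟨hx, hx'⟩
  have hlogA := hA.log (ne_of_gt hAx_pos)
  have hlogB : HasDerivAt (fun y : ℝ => Real.log (y - a)) (1 / (x - a)) x := by
    simpa using ((hasDerivAt_id x).sub_const a).log (sub_ne_zero.2 hxa)
  have htot := (hlogA.sub hlogB).const_mul (1 / π)
  have heq : greenG a =ᶠ[nhds x]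
      (fun y => (1 / π) * (Real.log (1 - a * y + Real.sqrt ((1 - a ^ 2) * (1 - y ^ 2)))
        - Real.log (y - a))) := by
    have hopen : IsOpen (Set.Ioo (-1:ℝ) 1 ∩ {y | y ≠ a}) := isOpen_Ioo.inter isOpen_ne
    have hmem : x ∈ Set.Ioo (-1:ℝ) 1 ∩ {y | y ≠ a} := ⟨⟨hx, hx'⟩, hxa⟩
    filter_upwards [hopen.mem_nhds hmem] with y hy
    have hApy := hApos y hy.1
    have hya : y - a ≠ 0 := sub_ne_zero.2 hy.2
    unfold greenG
    rw [Real.log_div (ne_of_gt hApy) (abs_ne_zero.2 hya), Real.log_abs]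
  have hval : (1 / π) * ((-a + (1 - a ^ 2) * (-(2 * x)) / (2 * Real.sqrt ((1 - a ^ 2) * (1 - x ^ 2)))) / (1 - a * x + Real.sqrt ((1 - a ^ 2) * (1 - x ^ 2))) - 1 / (x - a))
      = (1 / π) * (s / ((a - x) * t)) := by
    rw [hst]
    have hA' : 0 < 1 - a * x + s * t := by rw [hst] at hAx_pos; exact hAx_pos
    have hax : a - x ≠ 0 := sub_ne_zero.2 (Ne.symm hxa)
    have hxa' : x - a ≠ 0 := sub_ne_zero.2 hxa
    have hpi : (π : ℝ) ≠ 0 := Real.pi_ne_zero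
    field_simp
    linear_combination (-(x - a) * (s * t + 1 - t ^ 2 - a * x)) * hs2 + ((x - a) * (1 - a ^ 2)) * ht2
  rw [hval] at htot
  exact htot.congr_of_eventuallyEq heq

lemma alt_sum_bounds : ∀ (n : ℕ) (b : ℕ → ℝ), (∀ m, m + 1 < n → b (m + 1) ≤ b m) →
    (∀ m, m < n → 0 ≤ b m) →
    0 ≤ ∑ m ∈ Finset.range n, (-1 : ℝ) ^ m * b m ∧
      ∑ m ∈ Finset.range n, (-1 : ℝ) ^ m * b m ≤ (if n = 0 then 0 else b 0) := by
  intro n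
  induction n with
  | zero => intro b _ _; simp
  | succ n ih =>
    intro b hmono hpos
    have hcongr : ∀ m ∈ Finset.range n, (-1:ℝ)^(m+1) * b (m+1) = -((-1)^m * b (m+1)) :=
      fun m _ => by rw [pow_succ]; ring
    have hdec : ∑ m ∈ Finset.range (n+1), (-1:ℝ)^m * b m
        = b 0 - ∑ m ∈ Finset.range n, (-1:ℝ)^m * b (m+1) := by
      rw [Finset.sum_range_succ' (fun m => (-1:ℝ)^m * b m) n, Finset.sum_congr rfl hcongr,
        Finset.sum_neg_distrib]
      ring
    obtain ⟨hT0, hT1⟩ := ih (fun m => b (m+1)) (fun m hm => hmono (m+1) (by omega))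
      (fun m hm => hpos (m+1) (by omega))
    rw [hdec]
    constructor
    · rcases Nat.eq_zero_or_pos n with hn | hn
      · subst hn
        simp only [Finset.range_zero, Finset.sum_empty]
        linarith [hpos 0 (by omega)]
      · rw [if_neg (by omega)] at hT1
        have := hmono 0 (by omega)
        linarith
    · rw [if_neg (by omega)]; linarith

lemma alt_sum_lower (n : ℕ) (b : ℕ → ℝ) (hn : 1 ≤ n)
    (hmono : ∀ m, m + 1 < n → b (m + 1) ≤ b m)
    (hpos : ∀ m, m < n → 0 ≤ b m) (hb1 : 0 ≤ b 1) :
    b 0 - b 1 ≤ ∑ m ∈ Finset.range n, (-1 : ℝ) ^ m * b m := by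
  obtain ⟨n, rfl⟩ : ∃ m, n = m + 1 := ⟨n - 1, by omega⟩
  have hcongr : ∀ m ∈ Finset.range n, (-1:ℝ)^(m+1) * b (m+1) = -((-1)^m * b (m+1)) :=
    fun m _ => by rw [pow_succ]; ring
  have hdec : ∑ m ∈ Finset.range (n+1), (-1:ℝ)^m * b m
      = b 0 - ∑ m ∈ Finset.range n, (-1:ℝ)^m * b (m+1) := by
    rw [Finset.sum_range_succ' (fun m => (-1:ℝ)^m * b m) n, Finset.sum_congr rfl hcongr,
      Finset.sum_neg_distrib]
    ring
  obtain ⟨hT0, hT1⟩ := alt_sum_bounds n (fun m => b (m+1)) (fun m hm => hmono (m+1) (by omega))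
    (fun m hm => hpos (m+1) (by omega))
  rw [hdec]
  rcases Nat.eq_zero_or_pos n with hn' | hn'
  · subst hn'
    simp only [Finset.range_zero, Finset.sum_empty]
    linarith
  · rw [if_neg (by omega)] at hT1; linarith

lemma key_lower {ξ η x : ℝ} (h1 : -1 ≤ ξ) (h2 : ξ < η) (h3 : η < x) (h4 : x ≤ 1) (h5 : η < 1) :
    Real.sqrt (1 - ξ^2) / (x - ξ) + (η - ξ)^2 * (1 - |η|) / 16
      ≤ Real.sqrt (1 - η^2) / (x - η) := by
  have hξ1 : ξ < 1 := by linarith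
  have hη1 : -1 < η := by linarith
  have hs2 : Real.sqrt (1 - ξ^2) ^ 2 = 1 - ξ^2 := Real.sq_sqrt (by nlinarith)
  have hσ2 : Real.sqrt (1 - η^2) ^ 2 = 1 - η^2 := Real.sq_sqrt (by nlinarith)
  have hs0 : 0 ≤ Real.sqrt (1 - ξ^2) := Real.sqrt_nonneg _
  have hσ0 : 0 < Real.sqrt (1 - η^2) := Real.sqrt_pos.2 (by nlinarith)
  set s := Real.sqrt (1 - ξ^2) with hs_def
  set σ := Real.sqrt (1 - η^2) with hσ_def
  clear_value s σ
  have hs1 : s ≤ 1 := by nlinarith [sq_nonneg ξ]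
  have hσ1 : σ ≤ 1 := by nlinarith [sq_nonneg η]
  have hηabs : |η| < 1 := abs_lt.2 ⟨hη1, h5⟩
  have hηabs0 : 0 ≤ 1 - |η| := by linarith
  have hη_self : η ≤ |η| := le_abs_self η
  have hηx : η * x ≤ |η| := by
    calc η * x ≤ |η * x| := le_abs_self _
    _ = |η| * |x| := abs_mul _ _
    _ ≤ |η| * 1 := by
        have : |x| ≤ 1 := abs_le.2 ⟨by linarith, h4⟩
        nlinarith [abs_nonneg η]
    _ = |η| := mul_one _
  have hξx : ξ * x ≤ 1 := by
    nlinarith [mul_nonneg (by linarith : (0:ℝ) ≤ 1 - ξ) (by linarith : (0:ℝ) ≤ 1 + x),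
      mul_nonneg (by linarith : (0:ℝ) ≤ 1 + ξ) (by linarith : (0:ℝ) ≤ 1 - x)]
  obtain ⟨N, hN_def⟩ : ∃ N, N = σ * (x - ξ) - s * (x - η) := ⟨_, rfl⟩
  obtain ⟨D, hD_def⟩ : ∃ D, D = σ * (x - ξ) + s * (x - η) := ⟨_, rfl⟩
  obtain ⟨P, hP_def⟩ : ∃ P, P = (η - ξ) * ((x - ξ) * (1 - η * x) + (x - η) * (1 - ξ * x)) := ⟨_, rfl⟩
  obtain ⟨Q, hQ_def⟩ : ∃ Q, Q = (η - ξ)^2 * (1 - |η|) := ⟨_, rfl⟩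
  have hNP : N * D = P := by
    rw [hN_def, hD_def, hP_def]
    linear_combination (x - ξ)^2 * hσ2 - (x - η)^2 * hs2
  have hA1 : (η - ξ) * (1 - |η|) ≤ (x - ξ) * (1 - η * x) :=
    mul_le_mul (by linarith) (by linarith) hηabs0 (by linarith)
  have hA2 : (0:ℝ) ≤ (x - η) * (1 - ξ * x) :=
    mul_nonneg (by linarith) (by linarith)
  have hQP : Q ≤ P := by
    have h := mul_le_mul_of_nonneg_left
      (by linarith : (η - ξ) * (1 - |η|) ≤ (x - ξ) * (1 - η * x) + (x - η) * (1 - ξ * x))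
      (by linarith : (0:ℝ) ≤ η - ξ)
    rw [hQ_def, hP_def]
    calc (η - ξ)^2 * (1 - |η|) = (η - ξ) * ((η - ξ) * (1 - |η|)) := by ring
    _ ≤ _ := h
  have hD_pos : 0 < D := by
    rw [hD_def]
    nlinarith [mul_pos hσ0 (by linarith : (0:ℝ) < x - ξ),
      mul_nonneg hs0 (by linarith : (0:ℝ) ≤ x - η)]
  have hD_le : D ≤ 4 := by
    have b1 : σ * (x - ξ) ≤ 1 * 2 := mul_le_mul hσ1 (by linarith) (by linarith) (by norm_num)
    have b2 : s * (x - η) ≤ 1 * 2 := mul_le_mul hs1 (by linarith) (by linarith) (by norm_num)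
    rw [hD_def]; linarith
  have hQ0 : 0 ≤ Q := by rw [hQ_def]; exact mul_nonneg (sq_nonneg _) hηabs0
  have hP0 : 0 ≤ P := le_trans hQ0 hQP
  have hN0 : 0 ≤ N := by
    have : N = P / D := by rw [eq_div_iff (ne_of_gt hD_pos)]; exact hNP
    rw [this]; exact div_nonneg hP0 (le_of_lt hD_pos)
  have hN4 : Q / 4 ≤ N := by
    have h9 : Q ≤ N * 4 := by nlinarith [mul_nonneg hN0 (by linarith : (0:ℝ) ≤ 4 - D)]
    linarith
  have hxη : x - η ≠ 0 := ne_of_gt (by linarith)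
  have hxξ : x - ξ ≠ 0 := ne_of_gt (by linarith)
  have hgoal : σ / (x - η) - s / (x - ξ) = N / ((x - η) * (x - ξ)) := by
    rw [hN_def, div_sub_div _ _ hxη hxξ]
    congr 1
    ring
  have hden : 0 < (x - η) * (x - ξ) := mul_pos (by linarith) (by linarith)
  have hden4 : (x - η) * (x - ξ) ≤ 4 := by
    calc (x - η) * (x - ξ) ≤ 2 * 2 := mul_le_mul (by linarith) (by linarith) (by linarith) (by norm_num)
    _ = 4 := by norm_num
  have hfin : Q / 16 ≤ N / ((x - η) * (x - ξ)) := by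
    rw [div_le_div_iff₀ (by norm_num) hden]
    nlinarith [mul_le_mul_of_nonneg_left hden4 hQ0, hN4]
  have hfin2 : Q / 16 ≤ σ / (x - η) - s / (x - ξ) := by rw [hgoal]; exact hfin
  rw [← hQ_def]
  linarith

lemma key_lower' {x η ξ : ℝ} (h1 : -1 ≤ x) (h2 : x < η) (h3 : η < ξ) (h4 : ξ ≤ 1) (h5 : -1 < η) :
    Real.sqrt (1 - ξ^2) / (ξ - x) + (ξ - η)^2 * (1 - |η|) / 16
      ≤ Real.sqrt (1 - η^2) / (η - x) := by
  have h := key_lower (ξ := -ξ) (η := -η) (x := -x) (by linarith) (by linarith) (by linarith)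
    (by linarith) (by linarith)
  have e1 : -x - -ξ = ξ - x := by ring
  have e2 : -x - -η = η - x := by ring
  have e3 : (-ξ:ℝ)^2 = ξ^2 := by ring
  have e4 : (-η:ℝ)^2 = η^2 := by ring
  have e5 : (-η - -ξ:ℝ)^2 = (ξ - η)^2 := by ring
  rw [e1, e2, e3, e4, e5, abs_neg] at h
  exact h

theorem limit_profile_monotone (k : ℕ) (hk : 1 ≤ k) (ξ : ℕ → ℝ)
    (h0 : ξ 0 = -1) (hk1 : ξ (k + 1) = 1)
    (hord : ∀ i ≤ k, ξ i < ξ (i + 1)) :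
    ∃ c > 0, ∀ j ≤ k, ∀ x ∈ Set.Ioo (ξ j) (ξ (j + 1)),
      (c ≤ (-1 : ℝ) ^ j *
          deriv (fun y => ∑ i ∈ Finset.Icc 1 k, (-1 : ℝ) ^ (i - 1) * greenG (ξ i) y) x *
          Real.sqrt (1 - x ^ 2)) ∧
      StrictMonoOn
        (fun y => (-1 : ℝ) ^ j * ∑ i ∈ Finset.Icc 1 k, (-1 : ℝ) ^ (i - 1) * greenG (ξ i) y)
        (Set.Ioo (ξ j) (ξ (j + 1))) := by
  have hπ : (0:ℝ) < π := Real.pi_pos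
  have hmono : ∀ i1 i2, i1 < i2 → i2 ≤ k + 1 → ξ i1 < ξ i2 := by
    intro i1 i2 h12 h2
    induction i2 with
    | zero => omega
    | succ n ih =>
      rcases Nat.lt_or_ge i1 n with h | h
      · exact lt_trans (ih h (by omega)) (hord n (by omega))
      · have he : i1 = n := by omega
        subst he
        exact hord i1 (by omega)
  have hmono' : ∀ i1 i2, i1 ≤ i2 → i2 ≤ k + 1 → ξ i1 ≤ ξ i2 := by
    intro i1 i2 h12 h2
    rcases eq_or_lt_of_le h12 with h | h
    · rw [h]
    · exact le_of_lt (hmono _ _ h h2)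
  have hint : ∀ i, 1 ≤ i → i ≤ k → -1 < ξ i ∧ ξ i < 1 := by
    intro i h1i hik
    refine ⟨?_, ?_⟩
    · rw [← h0]; exact hmono 0 i (by omega) (by omega)
    · rw [← hk1]; exact hmono i (k+1) (by omega) (le_refl _)
  have hne : (Finset.range (k+1)).Nonempty := ⟨0, by simp⟩
  have hne2 : (Finset.Icc 1 k).Nonempty := ⟨1, by simp [hk]⟩
  set d := (Finset.range (k+1)).inf' hne (fun i => ξ (i+1) - ξ i) with hd_def
  set e := 1 - (Finset.Icc 1 k).sup' hne2 (fun i => |ξ i|) with he_def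
  clear_value d e
  have hd_pos : 0 < d := by
    rw [hd_def, Finset.lt_inf'_iff]
    intro i hi
    simp only [Finset.mem_range] at hi
    linarith [hord i (by omega)]
  have he_pos : 0 < e := by
    rw [he_def]
    have h : (Finset.Icc 1 k).sup' hne2 (fun i => |ξ i|) < 1 := by
      rw [Finset.sup'_lt_iff]
      intro i hi
      simp only [Finset.mem_Icc] at hi
      exact abs_lt.2 ⟨(hint i hi.1 hi.2).1, (hint i hi.1 hi.2).2⟩
    linarith
  refine ⟨d^2 * e / (16 * π), by positivity, ?_⟩
  intro j hj x hx
  -- the formal derivative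
  set V : ℝ → ℝ := fun y => ∑ i ∈ Finset.Icc 1 k,
    (-1:ℝ)^(i-1) * ((1/π) * (Real.sqrt (1 - ξ i ^ 2) / ((ξ i - y) * Real.sqrt (1 - y^2))))
    with hV_def
  have key1 : ∀ y ∈ Set.Ioo (ξ j) (ξ (j+1)),
      HasDerivAt (fun z => ∑ i ∈ Finset.Icc 1 k, (-1:ℝ)^(i-1) * greenG (ξ i) z) (V y) y := by
    intro y hy
    have hym : -1 < y := lt_of_le_of_lt (by rw [← h0]; exact hmono' 0 j (by omega) (by omega)) hy.1
    have hyM : y < 1 := lt_of_lt_of_le hy.2 (by rw [← hk1]; exact hmono' (j+1) (k+1) (by omega) (le_refl _))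
    apply HasDerivAt.fun_sum
    intro i hi
    simp only [Finset.mem_Icc] at hi
    have hξi := hint i hi.1 hi.2
    have hyi : y ≠ ξ i := by
      rcases le_or_gt i j with h | h
      · exact ne_of_gt (lt_of_le_of_lt (hmono' i j h (by omega)) hy.1)
      · exact ne_of_lt (lt_of_lt_of_le hy.2 (hmono' (j+1) i h (by omega)))
    exact (hasDerivAt_greenG hξi.1 hξi.2 hym hyM hyi).const_mul _
  have key2 : ∀ y ∈ Set.Ioo (ξ j) (ξ (j+1)),
      d^2 * e / (16 * π) ≤ (-1:ℝ)^j * V y * Real.sqrt (1 - y^2) := by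
    intro y hy
    have hξjy : ξ j < y := hy.1
    have hyξj1 : y < ξ (j+1) := hy.2
    have hym : -1 < y := lt_of_le_of_lt (by rw [← h0]; exact hmono' 0 j (by omega) (by omega)) hy.1
    have hyM : y < 1 := lt_of_lt_of_le hy.2 (by rw [← hk1]; exact hmono' (j+1) (k+1) (by omega) (le_refl _))
    have hty : 0 < Real.sqrt (1 - y^2) := Real.sqrt_pos.2 (by nlinarith)
    have hty' : Real.sqrt (1 - y^2) ≠ 0 := ne_of_gt hty
    -- step 1 : rearrangement
    have hstep1 : (-1:ℝ)^j * V y * Real.sqrt (1 - y^2)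
        = (1/π) * ((∑ m ∈ Finset.range j,
            (-1:ℝ)^m * (Real.sqrt (1 - ξ (j-m)^2) / (y - ξ (j-m))))
          + (∑ m ∈ Finset.range (k-j),
            (-1:ℝ)^m * (Real.sqrt (1 - ξ (j+1+m)^2) / (ξ (j+1+m) - y)))) := by
      have hterm : ∀ i ∈ Finset.Icc 1 k,
          (-1:ℝ)^j * ((-1:ℝ)^(i-1) * ((1/π) * (Real.sqrt (1 - ξ i ^ 2) / ((ξ i - y) * Real.sqrt (1 - y^2))))) * Real.sqrt (1 - y^2)
          = (1/π) * ((-1:ℝ)^j * (-1:ℝ)^(i-1) * (Real.sqrt (1 - ξ i ^ 2) / (ξ i - y))) := by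
        intro i hi
        simp only [Finset.mem_Icc] at hi
        have hiy : ξ i - y ≠ 0 := by
          rcases le_or_gt i j with h | h
          · exact ne_of_lt (by linarith [hmono' i j h (by omega)])
          · exact ne_of_gt (by linarith [hmono' (j+1) i h (by omega)])
        field_simp
      have hL : ∑ i ∈ Finset.Ico 1 (j+1),
          (1/π) * ((-1:ℝ)^j * (-1:ℝ)^(i-1) * (Real.sqrt (1 - ξ i ^ 2) / (ξ i - y)))
          = ∑ m ∈ Finset.range j,
            (1/π) * ((-1:ℝ)^m * (Real.sqrt (1 - ξ (j-m)^2) / (y - ξ (j-m)))) := by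
        rw [Finset.sum_Ico_eq_sum_range]
        simp only [Nat.add_sub_cancel]
        rw [← Finset.sum_range_reflect]
        apply Finset.sum_congr rfl
        intro m hm
        simp only [Finset.mem_range] at hm
        have hidx : 1 + (j - 1 - m) = j - m := by omega
        rw [hidx]
        have hsgn : (-1:ℝ)^j * (-1:ℝ)^(j - m - 1) = -(-1:ℝ)^m := by
          have h2 : j + (j - m - 1) = 2*(j - m - 1) + (m+1) := by omega
          rw [← pow_add, h2, pow_add, pow_mul]
          norm_num [pow_succ]
        have hden : ξ (j - m) - y = -(y - ξ (j - m)) := by ring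
        rw [hsgn, hden, div_neg]
        ring
      have hR : ∑ i ∈ Finset.Ico (j+1) (k+1),
          (1/π) * ((-1:ℝ)^j * (-1:ℝ)^(i-1) * (Real.sqrt (1 - ξ i ^ 2) / (ξ i - y)))
          = ∑ m ∈ Finset.range (k-j),
            (1/π) * ((-1:ℝ)^m * (Real.sqrt (1 - ξ (j+1+m)^2) / (ξ (j+1+m) - y))) := by
        rw [Finset.sum_Ico_eq_sum_range]
        have hkj : k + 1 - (j + 1) = k - j := by omega
        rw [hkj]
        apply Finset.sum_congr rfl
        intro m hm
        simp only [Finset.mem_range] at hm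
        have hidx : j + 1 + m - 1 = j + m := by omega
        rw [hidx]
        have hsgn : (-1:ℝ)^j * (-1:ℝ)^(j + m) = (-1:ℝ)^m := by
          have h2 : j + (j + m) = 2*j + m := by omega
          rw [← pow_add, h2, pow_add, pow_mul]
          norm_num
        rw [hsgn]
      calc (-1:ℝ)^j * V y * Real.sqrt (1 - y^2)
          = ∑ i ∈ Finset.Icc 1 k, (-1:ℝ)^j * ((-1:ℝ)^(i-1) * ((1/π) * (Real.sqrt (1 - ξ i ^ 2) / ((ξ i - y) * Real.sqrt (1 - y^2))))) * Real.sqrt (1 - y^2) := by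
            rw [hV_def, Finset.mul_sum, Finset.sum_mul]
        _ = ∑ i ∈ Finset.Icc 1 k, (1/π) * ((-1:ℝ)^j * (-1:ℝ)^(i-1) * (Real.sqrt (1 - ξ i ^ 2) / (ξ i - y))) := Finset.sum_congr rfl hterm
        _ = ∑ i ∈ Finset.Ico 1 (j+1), (1/π) * ((-1:ℝ)^j * (-1:ℝ)^(i-1) * (Real.sqrt (1 - ξ i ^ 2) / (ξ i - y)))
            + ∑ i ∈ Finset.Ico (j+1) (k+1), (1/π) * ((-1:ℝ)^j * (-1:ℝ)^(i-1) * (Real.sqrt (1 - ξ i ^ 2) / (ξ i - y))) := by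
            rw [← Finset.Ico_add_one_right_eq_Icc 1 k, Finset.sum_Ico_consecutive _ (by omega) (by omega)]
        _ = (1/π) * ((∑ m ∈ Finset.range j,
            (-1:ℝ)^m * (Real.sqrt (1 - ξ (j-m)^2) / (y - ξ (j-m))))
          + (∑ m ∈ Finset.range (k-j),
            (-1:ℝ)^m * (Real.sqrt (1 - ξ (j+1+m)^2) / (ξ (j+1+m) - y)))) := by
            rw [hL, hR, ← Finset.mul_sum, ← Finset.mul_sum, mul_add]
    -- bounds on the two groups
    have hBpos : ∀ m, m < j → 0 ≤ Real.sqrt (1 - ξ (j-m)^2) / (y - ξ (j-m)) := by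
      intro m hm
      apply div_nonneg (Real.sqrt_nonneg _)
      have : ξ (j - m) ≤ ξ j := hmono' (j-m) j (by omega) (by omega)
      linarith
    have hBmono : ∀ m, m + 1 < j →
        Real.sqrt (1 - ξ (j-(m+1))^2) / (y - ξ (j-(m+1)))
          ≤ Real.sqrt (1 - ξ (j-m)^2) / (y - ξ (j-m)) := by
      intro m hm
      have hidx : j - (m+1) = j - m - 1 := by omega
      rw [hidx]
      have h1 : -1 ≤ ξ (j - m - 1) := by rw [← h0]; exact hmono' 0 (j-m-1) (by omega) (by omega)
      have h2 : ξ (j - m - 1) < ξ (j - m) := hmono (j-m-1) (j-m) (by omega) (by omega)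
      have h3 : ξ (j - m) < y := lt_of_le_of_lt (hmono' (j-m) j (by omega) (by omega)) hξjy
      have h5 : ξ (j - m) < 1 := (hint (j-m) (by omega) (by omega)).2
      have := key_lower h1 h2 h3 (le_of_lt hyM) h5
      have hQ0 : 0 ≤ (ξ (j-m) - ξ (j-m-1))^2 * (1 - |ξ (j-m)|) / 16 := by
        have h6 := abs_lt.2 ⟨(hint (j-m) (by omega) (by omega)).1, h5⟩
        have h7 : 0 ≤ 1 - |ξ (j-m)| := by linarith
        exact div_nonneg (mul_nonneg (sq_nonneg _) h7) (by norm_num)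
      linarith
    have hCpos : ∀ m, m < k - j → 0 ≤ Real.sqrt (1 - ξ (j+1+m)^2) / (ξ (j+1+m) - y) := by
      intro m hm
      apply div_nonneg (Real.sqrt_nonneg _)
      have : ξ (j+1) ≤ ξ (j+1+m) := hmono' (j+1) (j+1+m) (by omega) (by omega)
      linarith
    have hCmono : ∀ m, m + 1 < k - j →
        Real.sqrt (1 - ξ (j+1+(m+1))^2) / (ξ (j+1+(m+1)) - y)
          ≤ Real.sqrt (1 - ξ (j+1+m)^2) / (ξ (j+1+m) - y) := by
      intro m hm
      have h2 : y < ξ (j+1+m) := lt_of_lt_of_le hyξj1 (hmono' (j+1) (j+1+m) (by omega) (by omega))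
      have h3 : ξ (j+1+m) < ξ (j+1+(m+1)) := hmono (j+1+m) (j+1+(m+1)) (by omega) (by omega)
      have h4 : ξ (j+1+(m+1)) ≤ 1 := by rw [← hk1]; exact hmono' (j+1+(m+1)) (k+1) (by omega) (le_refl _)
      have h5 : -1 < ξ (j+1+m) := (hint (j+1+m) (by omega) (by omega)).1
      have := key_lower' (le_of_lt hym) h2 h3 h4 h5
      have hQ0 : 0 ≤ (ξ (j+1+(m+1)) - ξ (j+1+m))^2 * (1 - |ξ (j+1+m)|) / 16 := by
        have h6 := abs_lt.2 ⟨h5, (hint (j+1+m) (by omega) (by omega)).2⟩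
        have h7 : 0 ≤ 1 - |ξ (j+1+m)| := by linarith
        exact div_nonneg (mul_nonneg (sq_nonneg _) h7) (by norm_num)
      linarith
    have hLnonneg : 0 ≤ ∑ m ∈ Finset.range j,
        (-1:ℝ)^m * (Real.sqrt (1 - ξ (j-m)^2) / (y - ξ (j-m))) :=
      (alt_sum_bounds j _ hBmono hBpos).1
    have hRnonneg : 0 ≤ ∑ m ∈ Finset.range (k-j),
        (-1:ℝ)^m * (Real.sqrt (1 - ξ (j+1+m)^2) / (ξ (j+1+m) - y)) :=
      (alt_sum_bounds (k-j) _ hCmono hCpos).1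
    have hc_le : d^2 * e / 16 ≤
        (∑ m ∈ Finset.range j, (-1:ℝ)^m * (Real.sqrt (1 - ξ (j-m)^2) / (y - ξ (j-m))))
        + (∑ m ∈ Finset.range (k-j), (-1:ℝ)^m * (Real.sqrt (1 - ξ (j+1+m)^2) / (ξ (j+1+m) - y))) := by
      rcases Nat.eq_zero_or_pos j with hj0 | hj1
      · -- j = 0 : use the right group
        subst hj0
        have hb1 : (0:ℝ) ≤ Real.sqrt (1 - ξ (0+1+1)^2) / (ξ (0+1+1) - y) := by
          apply div_nonneg (Real.sqrt_nonneg _)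
          have h8 : ξ (0+1) ≤ ξ (0+1+1) := hmono' (0+1) (0+1+1) (by omega) (by omega)
          linarith [hyξj1]
        have hklow := alt_sum_lower (k - 0) _ (by omega) hCmono hCpos hb1
        beta_reduce at hklow
        have h2 : y < ξ (0+1+0) := by
          have : (0+1+0) = 0+1 := by omega
          rw [this]; exact hyξj1
        have h3 : ξ (0+1+0) < ξ (0+1+1) := hmono _ _ (by omega) (by omega)
        have h4 : ξ (0+1+1) ≤ 1 := by rw [← hk1]; exact hmono' (0+1+1) (k+1) (by omega) (le_refl _)
        have h5 : -1 < ξ (0+1+0) := (hint (0+1+0) (by omega) (by omega)).1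
        have hkey := key_lower' (le_of_lt hym) h2 h3 h4 h5
        have hgap : d ≤ ξ (0+1+1) - ξ (0+1+0) := by
          have h9 := Finset.inf'_le (f := fun i => ξ (i+1) - ξ i) (Finset.mem_range.2 (show 1 < k + 1 by omega))
          rw [hd_def]
          exact h9
        have heb : e ≤ 1 - |ξ (0+1+0)| := by
          have h9 := Finset.le_sup' (f := fun i => |ξ i|) (Finset.mem_Icc.2 ⟨le_refl 1, hk⟩)
          rw [he_def]
          have h10 : (0+1+0) = 1 := by omega
          rw [h10]
          linarith [h9]
        have hdg : d^2 * e ≤ (ξ (0+1+1) - ξ (0+1+0))^2 * (1 - |ξ (0+1+0)|) :=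
          mul_le_mul (pow_le_pow_left₀ hd_pos.le hgap 2) heb he_pos.le (sq_nonneg _)
        have hLzero : ∑ m ∈ Finset.range 0,
            (-1:ℝ)^m * (Real.sqrt (1 - ξ (0-m)^2) / (y - ξ (0-m))) = 0 := by simp
        rw [hLzero, zero_add]
        linarith [hkey, hdg, hklow]
      · -- j ≥ 1 : use the left group
        have hb1 : (0:ℝ) ≤ Real.sqrt (1 - ξ (j-1)^2) / (y - ξ (j-1)) := by
          apply div_nonneg (Real.sqrt_nonneg _)
          have h8 : ξ (j - 1) ≤ ξ j := hmono' (j-1) j (by omega) (by omega)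
          linarith
        have hjlow := alt_sum_lower j _ hj1 hBmono hBpos hb1
        beta_reduce at hjlow
        have hz : j - 0 = j := by omega
        rw [hz] at hjlow
        have h1 : -1 ≤ ξ (j-1) := by rw [← h0]; exact hmono' 0 (j-1) (by omega) (by omega)
        have h2 : ξ (j-1) < ξ j := hmono (j-1) j (by omega) (by omega)
        have h5 : ξ j < 1 := (hint j (by omega) (by omega)).2
        have hkey := key_lower h1 h2 hξjy (le_of_lt hyM) h5
        have hgap : d ≤ ξ j - ξ (j-1) := by
          have h9 := Finset.inf'_le (f := fun i => ξ (i+1) - ξ i) (Finset.mem_range.2 (show j - 1 < k + 1 by omega))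
          have hidx : j - 1 + 1 = j := by omega
          rw [hidx] at h9
          rw [hd_def]
          exact h9
        have heb : e ≤ 1 - |ξ j| := by
          have h9 := Finset.le_sup' (f := fun i => |ξ i|) (Finset.mem_Icc.2 ⟨hj1, hj⟩)
          rw [he_def]
          linarith [h9]
        have hdg : d^2 * e ≤ (ξ j - ξ (j-1))^2 * (1 - |ξ j|) :=
          mul_le_mul (pow_le_pow_left₀ hd_pos.le hgap 2) heb he_pos.le (sq_nonneg _)
        calc d^2 * e / 16 ≤ (ξ j - ξ (j-1))^2 * (1 - |ξ j|) / 16 := by linarith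
        _ ≤ Real.sqrt (1 - ξ j^2) / (y - ξ j) - Real.sqrt (1 - ξ (j-1)^2) / (y - ξ (j-1)) := by
            linarith [hkey]
        _ ≤ ∑ m ∈ Finset.range j, (-1:ℝ)^m * (Real.sqrt (1 - ξ (j-m)^2) / (y - ξ (j-m))) := hjlow
        _ ≤ _ := by linarith [hRnonneg]
    rw [hstep1]
    rw [div_le_iff₀ (by positivity), mul_comm (1/π) _, mul_assoc]
    have hpin : (1/π) * (16 * π) = 16 := by field_simp
    rw [hpin]
    linarith [hc_le]
  obtain ⟨hx1, hx2⟩ := hx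
  constructor
  · rw [(key1 x ⟨hx1, hx2⟩).deriv]
    exact key2 x ⟨hx1, hx2⟩
  · apply strictMonoOn_of_deriv_pos (convex_Ioo _ _)
    · intro y hy
      exact (((key1 y hy).const_mul ((-1:ℝ)^j)).differentiableAt.continuousAt).continuousWithinAt
    · intro y hy
      rw [interior_Ioo] at hy
      rw [((key1 y hy).const_mul ((-1:ℝ)^j)).deriv]
      have h2 := key2 y hy
      have hym : -1 < y := lt_of_le_of_lt (by rw [← h0]; exact hmono' 0 j (by omega) (by omega)) hy.1
      have hyM : y < 1 := lt_of_lt_of_le hy.2 (by rw [← hk1]; exact hmono' (j+1) (k+1) (by omega) (le_refl _))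
      have hty : 0 < Real.sqrt (1 - y^2) := Real.sqrt_pos.2 (by nlinarith)
      have hc : 0 < d^2 * e / (16 * π) := by positivity
      by_contra hcon
      push_neg at hcon
      have : (-1:ℝ)^j * V y * Real.sqrt (1 - y^2) ≤ 0 :=
        mul_nonpos_of_nonpos_of_nonneg hcon hty.le
      linarith
end
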